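/- (Common slot lemma.) Let π and π' be m-fold quadratic Pfister forms over F and let c, c' ∈ F^× be such that π ⊥ c·π ≃ π' ⊥ c'·π'. Then there exists d ∈ F^× such that π ⊥ c·π ≃ π ⊥ d·π ≃ π' ⊥ d·π' ≃ π' ⊥ c'·π'. (In Pfister notation: if ⟨⟨c⟩⟩⊗π ≃ ⟨⟨c'⟩⟩⊗π' then there is d with ⟨⟨c⟩⟩⊗π ≃ ⟨⟨d⟩⟩⊗π ≃ ⟨⟨d⟩⟩⊗π' ≃ ⟨⟨c'⟩⟩⊗π'.) -/

import Mathlib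

/-- The binary quadratic form `[b₁,b₂] : (x,y) ↦ b₁x² + xy + b₂y²` on `F × F`. -/
def binQF (F : Type*) [Field F] (b₁ b₂ : F) : QuadraticForm F (F × F) :=
  LinearMap.BilinMap.toQuadraticMap (LinearMap.mk₂ F
    (fun p q : F × F => b₁ * (p.1 * q.1) + p.1 * q.2 + b₂ * (p.2 * q.2))
    (fun p p' q => by simp only [Prod.fst_add, Prod.snd_add]; ring)
    (fun a p q => by simp only [Prod.smul_fst, Prod.smul_snd, smul_eq_mul]; ring)
    (fun p q q' => by simp only [Prod.fst_add, Prod.snd_add]; ring)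
    (fun a p q => by simp only [Prod.smul_fst, Prod.smul_snd, smul_eq_mul]; ring))

/-- The underlying module of a `(k+1)`-fold quadratic Pfister form: `k` doublings of `F × F`. -/
def PfM (F : Type*) : ℕ → Type _
  | 0 => F × F
  | (k + 1) => PfM F k × PfM F k

instance PfM.instAddCommGroup (F : Type*) [Field F] : ∀ k, AddCommGroup (PfM F k)
  | 0 => inferInstanceAs (AddCommGroup (F × F))
  | (k + 1) =>
    letI := PfM.instAddCommGroup F k
    inferInstanceAs (AddCommGroup (PfM F k × PfM F k))

instance PfM.instModule (F : Type*) [Field F] : ∀ k, Module F (PfM F k)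
  | 0 => inferInstanceAs (Module F (F × F))
  | (k + 1) =>
    letI := PfM.instAddCommGroup F k
    letI := PfM.instModule F k
    inferInstanceAs (Module F (PfM F k × PfM F k))

/-- The `(k+1)`-fold quadratic Pfister form `⟨⟨b₁,…,b_k, c]]`, defined inductively by
`⟨⟨c]] = [1,c]` and `⟨⟨b₁,…,b_k,c]] = π ⊥ b_k·π` with `π = ⟨⟨b₁,…,b_{k-1},c]]`. -/
def pfisterQF (F : Type*) [Field F] : (k : ℕ) → (Fin k → F) → F → QuadraticForm F (PfM F k)
  | 0, _, c => binQF F 1 c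
  | (k + 1), b, c =>
    (pfisterQF F k (b ∘ Fin.castSucc) c).prod
      ((b (Fin.last k)) • pfisterQF F k (b ∘ Fin.castSucc) c)

/-- A quadratic form is an `m`-fold quadratic Pfister form if it is isometric to some
`⟨⟨b₁,…,b_{m-1}, c]]` with `b₁, …, b_{m-1} ∈ F^×` and `c ∈ F`. -/
def IsPfister {F : Type*} [Field F] {V : Type*} [AddCommGroup V] [Module F V]
    (m : ℕ) (π : QuadraticForm F V) : Prop :=
  ∃ (b : Fin (m - 1) → F) (c : F), (∀ i, b i ≠ 0) ∧
    QuadraticMap.Equivalent π (pfisterQF F (m - 1) b c)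


/-! ### Auxiliary machinery for the common slot lemma -/

open QuadraticMap

namespace CommonSlot

variable {F : Type*} [Field F] {V W U : Type*} [AddCommGroup V] [Module F V]
  [AddCommGroup W] [Module F W] [AddCommGroup U] [Module F U]

lemma smul_congr (a : F) {q : QuadraticForm F V} {q' : QuadraticForm F W}
    (h : q.Equivalent q') : (a • q).Equivalent (a • q') :=
  h.elim fun f => ⟨{ toLinearEquiv := f.toLinearEquiv
                     map_app' := fun m => by simp [QuadraticMap.smul_apply, f.map_app] }⟩

lemma smul_prod (a : F) (q₁ : QuadraticForm F V) (q₂ : QuadraticForm F W) :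
    a • (q₁.prod q₂) = (a • q₁).prod (a • q₂) := by
  ext x; simp [QuadraticMap.prod_apply, QuadraticMap.smul_apply, mul_add]

lemma sq_smul_equiv (a : F) (ha : a ≠ 0) (q : QuadraticForm F V) :
    ((a * a) • q).Equivalent q :=
  ⟨{ toLinearEquiv := LinearEquiv.smulOfNeZero F V a ha
     map_app' := fun m => by
       simpa [LinearEquiv.smulOfNeZero, LinearEquiv.smulOfUnit, Units.smul_def, QuadraticMap.smul_apply] using
         (QuadraticMap.map_smul q a m) }⟩

lemma qm_add (q : QuadraticForm F V) (x y : V) : q (x + y) = q x + q y + polar q x y := by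
  simp only [polar]; ring

lemma polar_prod (q₁ : QuadraticForm F V) (q₂ : QuadraticForm F W) (x y : V × W) :
    polar (q₁.prod q₂) x y = polar q₁ x.1 y.1 + polar q₂ x.2 y.2 := by
  simp only [polar, QuadraticMap.prod_apply, Prod.fst_add, Prod.snd_add]; ring

lemma polar_smul' (a : F) (q : QuadraticForm F V) (x y : V) :
    polar (a • q) x y = a * polar q x y := by
  simp only [polar, QuadraticMap.smul_apply, smul_eq_mul]; ring

lemma polar_map {q : QuadraticForm F V} {q' : QuadraticForm F W} (f : q.IsometryEquiv q')
    (x y : V) : polar q' (f x) (f y) = polar q x y := by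
  simp only [polar, ← map_add, f.map_app]

/-- `q` represents the scalar `e`. -/
def QRep (q : QuadraticForm F V) (e : F) : Prop := ∃ v, q v = e

/-- `q` is round: every nonzero represented value is a similarity factor. -/
def Round (q : QuadraticForm F V) : Prop :=
  ∀ e : F, e ≠ 0 → QRep q e → (e • q).Equivalent q

/-- the polar form of `q` is nondegenerate. -/
def NondegP (q : QuadraticForm F V) : Prop :=
  ∀ z : V, z ≠ 0 → ∃ w, polar q z w ≠ 0

lemma rep_of_equiv {q : QuadraticForm F V} {q' : QuadraticForm F W} (h : q.Equivalent q')
    {e : F} (he : QRep q' e) : QRep q e := by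
  obtain ⟨f⟩ := h; obtain ⟨v, hv⟩ := he
  exact ⟨f.symm v, by rw [← f.map_app]; simpa using hv⟩

lemma round_of_equiv {q : QuadraticForm F V} {q' : QuadraticForm F W} (h : q.Equivalent q')
    (hr : Round q') : Round q := by
  intro e he hrep
  have : QRep q' e := rep_of_equiv h.symm hrep
  exact ((smul_congr e h).trans (hr e he this)).trans h.symm

lemma round_smul_equiv {q : QuadraticForm F V} (hr : Round q) {e : F} (he : e ≠ 0)
    (hrep : QRep q e) : ∀ a : F, (a • q).Equivalent ((a * e) • q) := by
  intro a
  have h1 := smul_congr a (hr e he hrep)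
  rw [smul_smul] at h1
  exact h1.symm

lemma aniso_of_equiv {q : QuadraticForm F V} {q' : QuadraticForm F W} (h : q.Equivalent q')
    (ha : q'.Anisotropic) : q.Anisotropic := by
  intro x hx
  obtain ⟨f⟩ := h
  have := ha (f x) (by rw [f.map_app]; exact hx)
  simpa using (f : V ≃ₗ[F] W).map_eq_zero_iff.mp this

lemma nondeg_of_equiv {q : QuadraticForm F V} {q' : QuadraticForm F W} (h : q.Equivalent q')
    (hn : NondegP q') : NondegP q := by
  intro z hz
  obtain ⟨f⟩ := h
  obtain ⟨w, hw⟩ := hn (f z) (by simpa using (f : V ≃ₗ[F] W).map_ne_zero_iff.mpr hz)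
  refine ⟨f.symm w, fun hc => hw ?_⟩
  have h2 : polar q' (f z) (f (f.symm w)) = polar q z (f.symm w) := polar_map f _ _
  have h3 : f (f.symm w) = w := f.toLinearEquiv.apply_symm_apply w
  rw [h3, hc] at h2
  exact h2

lemma nondeg_prod {q₁ : QuadraticForm F V} {q₂ : QuadraticForm F W}
    (h₁ : NondegP q₁) (h₂ : NondegP q₂) : NondegP (q₁.prod q₂) := by
  rintro ⟨z₁, z₂⟩ hz
  rcases eq_or_ne z₁ 0 with h | h
  · have hz₂ : z₂ ≠ 0 := fun h0 => hz (by rw [h, h0]; rfl)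
    obtain ⟨w, hw⟩ := h₂ z₂ hz₂
    exact ⟨(0, w), by rw [polar_prod]; simpa using hw⟩
  · obtain ⟨w, hw⟩ := h₁ z₁ h
    exact ⟨(w, 0), by rw [polar_prod]; simpa using hw⟩

lemma nondeg_smul {q : QuadraticForm F V} (hn : NondegP q) {a : F} (ha : a ≠ 0) :
    NondegP (a • q) := by
  intro z hz
  obtain ⟨w, hw⟩ := hn z hz
  exact ⟨w, by rw [polar_smul']; exact mul_ne_zero ha hw⟩

lemma binQF_apply (b₁ b₂ : F) (p : F × F) :
    binQF F b₁ b₂ p = b₁ * (p.1 * p.1) + p.1 * p.2 + b₂ * (p.2 * p.2) := by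
  simp [binQF, LinearMap.BilinMap.toQuadraticMap_apply]

section CharTwoFacts
variable [CharP F 2]

lemma char2_add_self (a : F) : a + a = 0 := CharTwo.add_self_eq_zero a

lemma char2_eq_of_add_eq_zero {a b : F} (h : a + b = 0) : a = b := by
  rw [add_eq_zero_iff_eq_neg] at h; rw [h, CharTwo.neg_eq]

/-- Isotropic forms with nondegenerate polar form are universal. -/
lemma universal_of_isotropic {q : QuadraticForm F V} (hn : NondegP q)
    {v : V} (hv : v ≠ 0) (hq : q v = 0) (a : F) : QRep q a := by
  obtain ⟨w, hw⟩ := hn v hv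
  refine ⟨((a - q w) / polar q v w) • v + w, ?_⟩
  rw [qm_add, QuadraticMap.map_smul, polar_smul_left, hq, smul_eq_mul, smul_eq_mul]
  field_simp
  ring

noncomputable def reflectLM (q : QuadraticForm F V) (w : V) : V →ₗ[F] V :=
  LinearMap.id + (LinearMap.toSpanSingleton F V w).comp ((q w)⁻¹ • (polarBilin q).flip w)

lemma reflectLM_apply (q : QuadraticForm F V) (w v : V) :
    reflectLM q w v = v + ((q w)⁻¹ * polar q v w) • w := by
  simp [reflectLM, LinearMap.toSpanSingleton, mul_smul]

lemma reflectLM_inv (q : QuadraticForm F V) (w : V) :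
    Function.Involutive (reflectLM q w) := by
  intro v
  rw [reflectLM_apply, reflectLM_apply, polar_add_left, polar_smul_left, polar_self]
  have h2 : (2 : ℕ) • q w = 0 := by rw [two_nsmul]; exact CharTwo.add_self_eq_zero _
  rw [h2, smul_eq_mul, mul_zero, add_zero, add_assoc, ← add_smul,
    CharTwo.add_self_eq_zero, zero_smul, add_zero]

/-- Reflection in a vector of nonzero value, in characteristic `2`. -/
noncomputable def reflect (q : QuadraticForm F V) (w : V) : q.IsometryEquiv q where
  toLinearEquiv := LinearEquiv.ofInvolutive (reflectLM q w) (reflectLM_inv q w)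
  map_app' := fun v => by
    show q (reflectLM q w v) = q v
    rcases eq_or_ne (q w) 0 with hw | hw
    · rw [reflectLM_apply, hw, inv_zero, zero_mul, zero_smul, add_zero]
    rw [reflectLM_apply, qm_add, QuadraticMap.map_smul, polar_smul_right,
      smul_eq_mul, smul_eq_mul]
    have h4 : ((q w)⁻¹ * polar q v w * ((q w)⁻¹ * polar q v w)) * q w
        = (q w)⁻¹ * polar q v w * polar q v w := by field_simp
    rw [h4, add_assoc, CharTwo.add_self_eq_zero, add_zero]

lemma reflect_apply (q : QuadraticForm F V) (w v : V) :
    reflect q w v = v + ((q w)⁻¹ * polar q v w) • w := reflectLM_apply q w v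

noncomputable def Tequiv (c₁ : F) (h : 1 + c₁ ≠ 0) : (V × V) ≃ₗ[F] (V × V) where
  toFun x := (x.1 + c₁ • x.2, x.1 + x.2)
  invFun x := ((1 + c₁)⁻¹ • (x.1 + c₁ • x.2), (1 + c₁)⁻¹ • (x.1 + x.2))
  map_add' a b := by ext <;> simp <;> module
  map_smul' a b := by ext <;> simp <;> module
  left_inv x := by
    have h2 : (2 : F) = 0 := CharTwo.two_eq_zero
    have h4 : (4 : F) = 0 := by
      rw [show (4 : F) = 2 * 2 by norm_num, h2, mul_zero]
    ext <;> simp only [] <;> match_scalars <;> field_simp <;> ring_nf <;> simp [h2, h4]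
  right_inv x := by
    have h2 : (2 : F) = 0 := CharTwo.two_eq_zero
    have h4 : (4 : F) = 0 := by
      rw [show (4 : F) = 2 * 2 by norm_num, h2, mul_zero]
    ext <;> simp only [] <;> match_scalars <;> field_simp <;> ring_nf <;> simp [h2, h4]

lemma Tequiv_isometry (q : QuadraticForm F V) (c₁ : F) (h : 1 + c₁ ≠ 0) :
    ((1 + c₁) • (q.prod (c₁ • q))).Equivalent (q.prod (c₁ • q)) := by
  have h2 : (2 : F) = 0 := CharTwo.two_eq_zero
  refine ⟨{ toLinearEquiv := Tequiv c₁ h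
            map_app' := fun x => ?_ }⟩
  show (q.prod (c₁ • q)) (x.1 + c₁ • x.2, x.1 + x.2) = _
  simp only [QuadraticMap.prod_apply, QuadraticMap.smul_apply, smul_eq_mul]
  rw [qm_add, qm_add, QuadraticMap.map_smul, polar_smul_right]
  simp only [smul_eq_mul]
  linear_combination (polar q x.1 x.2 * c₁) * h2

lemma round_step {q : QuadraticForm F V} (hr : Round q) {b : F} (hb : b ≠ 0) :
    Round (q.prod (b • q)) := by
  rintro e he ⟨⟨u, v⟩, huv⟩
  rw [QuadraticMap.prod_apply, QuadraticMap.smul_apply, smul_eq_mul] at huv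
  set a := q u with ha
  set s := q v with hs
  rw [smul_prod]
  rcases eq_or_ne s 0 with hs0 | hs0
  · have hea : e = a := by rw [← huv, hs0, mul_zero, add_zero]
    have hrepa : QRep q a := ⟨u, rfl⟩
    have E1 : (e • q).Equivalent q := hea ▸ hr a (hea ▸ he) hrepa
    have E2 : (e • (b • q)).Equivalent (b • q) := by
      rw [smul_smul, mul_comm e b, ← smul_smul]
      exact smul_congr b E1
    exact E1.prod E2
  · rcases eq_or_ne a 0 with ha0 | ha0
    · have hes : e = b * s := by rw [← huv, ha0, zero_add]
      have hreps : QRep q s := ⟨v, rfl⟩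
      have E1 : (e • q).Equivalent (b • q) := by
        rw [hes, ← smul_smul]
        exact smul_congr b (hr s hs0 hreps)
      have E2 : (e • (b • q)).Equivalent q := by
        rw [smul_smul, hes]
        have h1 : b * s * b = s * (b * b) := by ring
        rw [h1]
        have h2 : ((s * (b * b)) • q).Equivalent (s • q) := by
          rw [← smul_smul]
          exact smul_congr s (sq_smul_equiv b hb q)
        exact h2.trans (hr s hs0 hreps)
      exact (E1.prod E2).trans ⟨QuadraticMap.IsometryEquiv.prodComm _ _⟩
    · set c₁ := b * s * a⁻¹ with hc₁
      have hrepa : QRep q a := ⟨u, rfl⟩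
      have hreps : QRep q s := ⟨v, rfl⟩
      have hac : a * (1 + c₁) = e := by
        rw [← huv, hc₁]
        field_simp
      have h1c : 1 + c₁ ≠ 0 := by
        intro h0
        rw [h0, mul_zero] at hac
        exact he hac.symm
      have E1 : (b • q).Equivalent (c₁ • q) := by
        have h5 := round_smul_equiv hr hs0 hreps (b * a⁻¹)
        have h6 := round_smul_equiv hr ha0 hrepa (b * a⁻¹)
        have hb' : b * a⁻¹ * a = b := by field_simp
        have hc' : b * a⁻¹ * s = c₁ := by rw [hc₁]; ring
        rw [hc'] at h5
        rw [hb'] at h6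
        exact h6.symm.trans h5
      have Eρ : ((q.prod (b • q))).Equivalent (q.prod (c₁ • q)) :=
        (QuadraticMap.Equivalent.refl q).prod E1
      have step1 : ((e • q).prod (e • (b • q))).Equivalent (e • (q.prod (b • q))) := by
        rw [smul_prod]
      have step2 : (e • (q.prod (b • q))).Equivalent ((a * (1 + c₁)) • (q.prod (c₁ • q))) := by
        rw [hac]
        exact smul_congr e Eρ
      have step3 : ((a * (1 + c₁)) • (q.prod (c₁ • q))).Equivalent (a • (q.prod (c₁ • q))) := by
        rw [← smul_smul]
        exact smul_congr a (Tequiv_isometry q c₁ h1c)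
      have step4 : (a • (q.prod (c₁ • q))).Equivalent (q.prod (b • q)) := by
        rw [smul_prod]
        refine QuadraticMap.Equivalent.prod (hr a ha0 hrepa) ?_
        have h3 : a • c₁ • q = (b * s) • q := by
          rw [smul_smul, hc₁]
          congr 1
          field_simp
        rw [h3, ← smul_smul]
        exact smul_congr b (hr s hs0 hreps)
      exact ((step1.trans step2).trans step3).trans step4

lemma polar_binQF (c : F) (z w : F × F) :
    polar (binQF F 1 c) z w = z.1 * w.2 + z.2 * w.1 := by
  have h2 : (2 : F) = 0 := CharTwo.two_eq_zero
  simp only [polar, binQF_apply, Prod.fst_add, Prod.snd_add]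
  linear_combination (z.1 * w.1 + c * z.2 * w.2) * h2

lemma nondeg_binQF (c : F) : NondegP (binQF F 1 c) := by
  rintro ⟨z₁, z₂⟩ hz
  rcases eq_or_ne z₁ 0 with h | h
  · have hz₂ : z₂ ≠ 0 := fun h0 => hz (by rw [h, h0]; rfl)
    exact ⟨(1, 0), by rw [polar_binQF]; simpa using hz₂⟩
  · exact ⟨(0, 1), by rw [polar_binQF]; simpa using h⟩

lemma round_binQF (c : F) : Round (binQF F 1 c) := by
  rintro e he ⟨⟨x, y⟩, hxy⟩
  rw [binQF_apply] at hxy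
  simp only at hxy
  have h2 : (2 : F) = 0 := CharTwo.two_eq_zero
  have hxy' : x * x + x * y + c * (y * y) = e := by linear_combination hxy
  have he' : x * x + x * y + c * (y * y) ≠ 0 := by rw [hxy']; exact he
  have hden : x * (x + y) + y ^ 2 * c ≠ 0 := by
    rw [show x * (x + y) + y ^ 2 * c = x * x + x * y + c * (y * y) by ring]; exact he'
  let L : (F × F) ≃ₗ[F] (F × F) := {
      toFun := fun p => (x * p.1 + c * y * p.2, y * p.1 + (x + y) * p.2)
      invFun := fun p => (e⁻¹ * ((x + y) * p.1 + c * y * p.2), e⁻¹ * (y * p.1 + x * p.2))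
      map_add' := fun a b => by ext <;> simp <;> ring
      map_smul' := fun a b => by ext <;> simp <;> ring
      left_inv := fun p => by
        ext <;> simp only <;> rw [← hxy'] <;> field_simp <;>
          [(linear_combination (c * y * y * p.2 + c * x * y * p.2) * h2);
           (linear_combination (x * y * p.1) * h2)]
      right_inv := fun p => by
        ext <;> simp only <;> rw [← hxy'] <;> field_simp <;>
          [(linear_combination (c * x * y * p.2) * h2);
           (linear_combination (y * y * p.1 + x * y * p.1) * h2)] }
  refine ⟨{ toLinearEquiv := L
            map_app' := fun p => ?_ }⟩
  show binQF F 1 c (x * p.1 + c * y * p.2, y * p.1 + (x + y) * p.2) = _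
  simp only [QuadraticMap.smul_apply, smul_eq_mul, binQF_apply]
  rw [← hxy']
  linear_combination (c * y * y * p.2 * p.2 + c * y * y * p.1 * p.2
    + c * x * y * p.2 * p.2 + 2 * c * x * y * p.1 * p.2) * h2

end CharTwoFacts

end CommonSlot

namespace CommonSlot

variable {F : Type*} [Field F]

instance PfM.instFiniteDimensional (F : Type*) [Field F] :
    ∀ k, FiniteDimensional F (PfM F k)
  | 0 => inferInstanceAs (FiniteDimensional F (F × F))
  | (k + 1) =>
    letI := PfM.instFiniteDimensional F k
    inferInstanceAs (FiniteDimensional F (PfM F k × PfM F k))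

lemma pfister_rep_one :
    ∀ k (b : Fin k → F) (c : F), ∃ v, pfisterQF F k b c v = 1
  | 0, b, c => ⟨(1, 0), by show binQF F 1 c (1, 0) = 1; rw [binQF_apply]; simp⟩
  | (k + 1), b, c => by
    obtain ⟨v, hv⟩ := pfister_rep_one k (b ∘ Fin.castSucc) c
    refine ⟨(v, 0), ?_⟩
    show (pfisterQF F k (b ∘ Fin.castSucc) c).prod _ _ = 1
    rw [QuadraticMap.prod_apply, hv, map_zero]
    simp

variable [CharP F 2]

lemma pfister_round :
    ∀ k (b : Fin k → F) (c : F), (∀ i, b i ≠ 0) → Round (pfisterQF F k b c)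
  | 0, b, c, _ => round_binQF c
  | (k + 1), b, c, hb => by
    have ih := pfister_round k (b ∘ Fin.castSucc) c (fun i => hb _)
    exact round_step ih (hb (Fin.last k))

lemma pfister_nondeg :
    ∀ k (b : Fin k → F) (c : F), (∀ i, b i ≠ 0) → NondegP (pfisterQF F k b c)
  | 0, b, c, _ => nondeg_binQF c
  | (k + 1), b, c, hb => by
    have ih := pfister_nondeg k (b ∘ Fin.castSucc) c (fun i => hb _)
    exact nondeg_prod ih (nondeg_smul ih (hb (Fin.last k)))

end CommonSlot


namespace CommonSlot

section Core
variable {F : Type*} [Field F] [CharP F 2]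
variable {V : Type*} [AddCommGroup V] [Module F V]
variable {V' : Type*} [AddCommGroup V'] [Module F V']
variable [FiniteDimensional F V] [FiniteDimensional F V']

lemma common_value_of_aniso
    (π : QuadraticForm F V) (π' : QuadraticForm F V') (c c' : F) (hc' : c' ≠ 0)
    (hrank : Module.finrank F V = Module.finrank F V')
    (hπ'a : π'.Anisotropic)
    (hρa : (π.prod (c • π)).Anisotropic)
    (hρn : NondegP (π.prod (c • π)))
    (h1 : QRep π 1) (h1' : QRep π' 1)
    (h : (π.prod (c • π)).Equivalent (π'.prod (c' • π'))) :
    ∃ u v, u ≠ 0 ∧ c * π u = c' * π' v := by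
  by_contra hcon
  push_neg at hcon
  set ρ := π.prod (c • π) with hρdef
  set φ := (c • π).prod (c' • π') with hφdef
  set ψ := π.prod π' with hψdef
  have hφa : φ.Anisotropic := by
    rintro ⟨u, v⟩ huv
    rw [hφdef, QuadraticMap.prod_apply, QuadraticMap.smul_apply, QuadraticMap.smul_apply,
      smul_eq_mul, smul_eq_mul] at huv
    rcases eq_or_ne u 0 with hu | hu
    · have hπv : π' v = 0 := by
        subst hu
        simp only [map_zero, mul_zero, zero_add] at huv
        exact (mul_eq_zero.mp huv).resolve_left hc'
      have hv : v = 0 := hπ'a v hπv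
      rw [hu, hv]; rfl
    · exact absurd (char2_eq_of_add_eq_zero huv) (hcon u v hu)
  obtain ⟨g⟩ := h
  set Θ := φ.prod ψ with hΘdef
  let e1 := QuadraticMap.IsometryEquiv.prodProdProdComm (c • π) (c' • π') π π'
  let e2 := (QuadraticMap.IsometryEquiv.prodComm (c • π) π).prod
    (QuadraticMap.IsometryEquiv.prodComm (c' • π') π')
  let e3 := (QuadraticMap.IsometryEquiv.refl ρ).prod g.symm
  let E := (e1.trans e2).trans e3
  obtain ⟨u₀, hu₀⟩ := h1
  obtain ⟨u₀', hu₀'⟩ := h1'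
  set y₀ : V × V' := (u₀, u₀') with hy₀def
  have hψy₀ : ψ y₀ = 0 := by
    rw [hψdef, QuadraticMap.prod_apply]
    show π u₀ + π' u₀' = 0
    rw [hu₀, hu₀']
    exact char2_add_self 1
  have hy₀ : y₀ ≠ 0 := by
    intro h0
    have : u₀ = 0 := congrArg Prod.fst h0
    rw [this, map_zero] at hu₀
    exact one_ne_zero hu₀.symm
  have key : ∀ σ : ρ.IsometryEquiv ρ, (E (0, y₀)).2 = σ ((E (0, y₀)).1) := by
    intro σ
    set j : (V × V) →ₗ[F] ((V × V') × (V × V')) :=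
      E.symm.toLinearEquiv.toLinearMap.comp
        (LinearMap.prod LinearMap.id σ.toLinearEquiv.toLinearMap) with hjdef
    have hjapp : ∀ x, j x = E.symm.toLinearEquiv (x, σ x) := fun x => rfl
    have hjval : ∀ x, Θ (j x) = 0 := by
      intro x
      have h5 : Θ (E.symm (x, σ x)) = (ρ.prod ρ) (x, σ x) := E.symm.map_app _
      have h6 : E.symm.toLinearEquiv (x, σ x) = E.symm (x, σ x) := rfl
      rw [hjapp, h6, h5, QuadraticMap.prod_apply]
      show ρ x + ρ (σ x) = 0
      rw [σ.map_app]
      exact char2_add_self _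
    set p : (V × V) →ₗ[F] (V × V') := (LinearMap.snd F (V × V') (V × V')).comp j with hpdef
    have hpapp : ∀ x, p x = (j x).2 := fun x => rfl
    have hpinj : Function.Injective p := by
      rw [← LinearMap.ker_eq_bot]
      rw [LinearMap.ker_eq_bot']
      intro x hx
      have hjx2 : (j x).2 = 0 := by rw [← hpapp]; exact hx
      have hθ : Θ (j x) = φ (j x).1 + ψ (j x).2 := QuadraticMap.prod_apply _ _ _
      have h7 : φ (j x).1 = 0 := by
        have := hjval x
        rw [hθ, hjx2, map_zero, add_zero] at this
        exact this
      have h8 : (j x).1 = 0 := hφa _ h7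
      have h9 : j x = 0 := Prod.ext h8 hjx2
      have h10 : E.symm.toLinearEquiv (x, σ x) = 0 := by rw [← hjapp]; exact h9
      have h11 : (x, σ x) = (0 : (V × V) × (V × V)) :=
        (LinearEquiv.map_eq_zero_iff _).mp h10
      exact congrArg Prod.fst h11
    have hrank2 : Module.finrank F (V × V) = Module.finrank F (V × V') := by
      rw [Module.finrank_prod, Module.finrank_prod, hrank]
    have hpsurj : Function.Surjective p :=
      (LinearMap.injective_iff_surjective_of_finrank_eq_finrank hrank2).mp hpinj
    obtain ⟨x, hx⟩ := hpsurj y₀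
    have hjx2 : (j x).2 = y₀ := by rw [← hpapp]; exact hx
    have hθ : Θ (j x) = φ (j x).1 + ψ (j x).2 := QuadraticMap.prod_apply _ _ _
    have h7 : φ (j x).1 = 0 := by
      have := hjval x
      rw [hθ, hjx2, hψy₀, add_zero] at this
      exact this
    have h8 : (j x).1 = 0 := hφa _ h7
    have h9 : j x = (0, y₀) := Prod.ext h8 hjx2
    have h10 : E.symm.toLinearEquiv (x, σ x) = (0, y₀) := by rw [← hjapp]; exact h9
    have h11 : (x, σ x) = E.toLinearEquiv (0, y₀) := by
      rw [← h10]
      exact (E.toLinearEquiv.apply_symm_apply (x, σ x)).symm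
    have h12 : (E (0, y₀)).1 = x := by rw [show E (0, y₀) = E.toLinearEquiv (0, y₀) from rfl, ← h11]
    have h13 : (E (0, y₀)).2 = σ x := by rw [show E (0, y₀) = E.toLinearEquiv (0, y₀) from rfl, ← h11]
    rw [h12, h13]
  have hz := key (QuadraticMap.IsometryEquiv.refl ρ)
  set z := (E (0, y₀)).1 with hzdef
  have hzz : (E (0, y₀)).2 = z := hz
  have hzne : z ≠ 0 := by
    intro h0
    have hE0 : E (0, y₀) = 0 := Prod.ext (by rw [← hzdef]; exact h0) (by rw [hzz]; exact h0)
    have : ((0, y₀) : (V × V') × (V × V')) = 0 := by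
      have := (LinearEquiv.map_eq_zero_iff (E.toLinearEquiv)).mp hE0
      exact this
    exact hy₀ (congrArg Prod.snd this)
  obtain ⟨w, hw⟩ := hρn z hzne
  have hwne : w ≠ 0 := fun h0 => hw (by rw [h0, polar_zero_right])
  have hρw : ρ w ≠ 0 := fun h0 => hwne (hρa w h0)
  have hk := key (reflect ρ w)
  rw [reflect_apply, hzz] at hk
  have h14 : ((ρ w)⁻¹ * polar ρ z w) • w = 0 := by
    have := left_eq_add.mp hk
    exact this
  rcases smul_eq_zero.mp h14 with h15 | h15
  · exact (mul_ne_zero (inv_ne_zero hρw) hw) h15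
  · exact hwne h15

end Core

end CommonSlot


namespace CommonSlot

section MoreRound
variable {F : Type*} [Field F] {V : Type*} [AddCommGroup V] [Module F V]

lemma rep_inv {q : QuadraticForm F V} {e : F} (he : e ≠ 0) (h : QRep q e) : QRep q e⁻¹ := by
  obtain ⟨v, hv⟩ := h
  refine ⟨e⁻¹ • v, ?_⟩
  rw [QuadraticMap.map_smul, hv, smul_eq_mul]
  field_simp

lemma round_rep_mul {q : QuadraticForm F V} (hr : Round q) {e₁ e₂ : F}
    (h₁ : QRep q e₁) (h₂e : e₂ ≠ 0) (h₂ : QRep q e₂) : QRep q (e₁ * e₂) := by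
  obtain ⟨f⟩ := hr e₂ h₂e h₂
  obtain ⟨v, hv⟩ := h₁
  refine ⟨f v, ?_⟩
  rw [f.map_app, QuadraticMap.smul_apply, hv, smul_eq_mul, mul_comm]

lemma round_smul_smul {q : QuadraticForm F V} (hr : Round q) {a b : F} (ha : a ≠ 0)
    (hb : b ≠ 0) (hrep : QRep q (a * b⁻¹)) : (a • q).Equivalent (b • q) := by
  have hne : a * b⁻¹ ≠ 0 := mul_ne_zero ha (inv_ne_zero hb)
  have h5 := round_smul_equiv hr hne hrep b
  have h6 : b * (a * b⁻¹) = a := by field_simp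
  rw [h6] at h5
  exact h5.symm

end MoreRound

end CommonSlot

/-- common slot lemma: over a field of characteristic 2, if `π`, `π'` are
`m`-fold quadratic Pfister forms and `c, c' ∈ F^×` satisfy `π ⊥ c·π ≃ π' ⊥ c'·π'`, then
there is `d ∈ F^×` with `π ⊥ c·π ≃ π ⊥ d·π ≃ π' ⊥ d·π' ≃ π' ⊥ c'·π'`. -/
theorem stmt8 (F : Type*) [Field F] [CharP F 2]
    (V : Type*) [AddCommGroup V] [Module F V]
    (V' : Type*) [AddCommGroup V'] [Module F V'] (m : ℕ)
    (π : QuadraticForm F V) (π' : QuadraticForm F V')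
    (hπ : IsPfister m π) (hπ' : IsPfister m π')
    (c c' : F) (hc : c ≠ 0) (hc' : c' ≠ 0)
    (h : QuadraticMap.Equivalent (π.prod (c • π)) (π'.prod (c' • π'))) :
    ∃ d : F, d ≠ 0 ∧
      QuadraticMap.Equivalent (π.prod (c • π)) (π.prod (d • π)) ∧
      QuadraticMap.Equivalent (π.prod (d • π)) (π'.prod (d • π')) ∧
      QuadraticMap.Equivalent (π'.prod (d • π')) (π'.prod (c' • π')) := by
  classical
  open CommonSlot in
  obtain ⟨b, c₀, hb, hequiv⟩ := hπ
  obtain ⟨b', c₀', hb', hequiv'⟩ := hπ'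
  obtain ⟨f⟩ := hequiv
  obtain ⟨f'⟩ := hequiv'
  haveI : FiniteDimensional F V :=
    LinearEquiv.finiteDimensional (f.toLinearEquiv : V ≃ₗ[F] PfM F (m - 1)).symm
  haveI : FiniteDimensional F V' :=
    LinearEquiv.finiteDimensional (f'.toLinearEquiv : V' ≃ₗ[F] PfM F (m - 1)).symm
  have hrank : Module.finrank F V = Module.finrank F V' := by
    rw [(f.toLinearEquiv : V ≃ₗ[F] PfM F (m - 1)).finrank_eq,
      (f'.toLinearEquiv : V' ≃ₗ[F] PfM F (m - 1)).finrank_eq]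
  have hRπ : Round π := round_of_equiv ⟨f⟩ (pfister_round (m - 1) b c₀ hb)
  have hRπ' : Round π' := round_of_equiv ⟨f'⟩ (pfister_round (m - 1) b' c₀' hb')
  have hNπ : NondegP π := nondeg_of_equiv ⟨f⟩ (pfister_nondeg (m - 1) b c₀ hb)
  have hNπ' : NondegP π' := nondeg_of_equiv ⟨f'⟩ (pfister_nondeg (m - 1) b' c₀' hb')
  have h1π : QRep π 1 := rep_of_equiv ⟨f⟩ (pfister_rep_one (m - 1) b c₀)
  have h1π' : QRep π' 1 := rep_of_equiv ⟨f'⟩ (pfister_rep_one (m - 1) b' c₀')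
  by_cases hisoπ : ∃ v, v ≠ 0 ∧ π v = 0
  · -- `π` is isotropic, hence universal; take `d = c'`
    obtain ⟨v₀, hv₀, hπv₀⟩ := hisoπ
    have huniv : ∀ a : F, QRep π a := fun a => universal_of_isotropic hNπ hv₀ hπv₀ a
    have Ecd : ((c' • π)).Equivalent (c • π) :=
      round_smul_smul hRπ hc' hc (huniv (c' * c⁻¹))
    have first : (π.prod (c • π)).Equivalent (π.prod (c' • π)) :=
      (QuadraticMap.Equivalent.refl π).prod Ecd.symm
    exact ⟨c', hc', first, first.symm.trans h, QuadraticMap.Equivalent.refl _⟩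
  by_cases hisoπ' : ∃ v, v ≠ 0 ∧ π' v = 0
  · -- `π'` is isotropic, hence universal; take `d = c`
    obtain ⟨v₀, hv₀, hπv₀⟩ := hisoπ'
    have huniv : ∀ a : F, QRep π' a := fun a => universal_of_isotropic hNπ' hv₀ hπv₀ a
    have Ecd : ((c' • π')).Equivalent (c • π') :=
      round_smul_smul hRπ' hc' hc (huniv (c' * c⁻¹))
    have third : (π'.prod (c • π')).Equivalent (π'.prod (c' • π')) :=
      (QuadraticMap.Equivalent.refl π').prod Ecd.symm
    exact ⟨c, hc, QuadraticMap.Equivalent.refl _, h.trans third.symm, third⟩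
  have hπa : π.Anisotropic := fun v hv => by
    by_contra hne
    exact hisoπ ⟨v, hne, hv⟩
  have hπ'a : π'.Anisotropic := fun v hv => by
    by_contra hne
    exact hisoπ' ⟨v, hne, hv⟩
  by_cases hisoρ : ∃ x, x ≠ 0 ∧ (π.prod (c • π)) x = 0
  · -- the Pfister form `π ⊥ c·π` is isotropic; take `d = 1`
    obtain ⟨⟨u, v⟩, hx, hρx⟩ := hisoρ
    rw [QuadraticMap.prod_apply, QuadraticMap.smul_apply, smul_eq_mul] at hρx
    have hv : v ≠ 0 := by
      intro h0
      rw [h0, map_zero, mul_zero, add_zero] at hρx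
      exact hx (by rw [hπa u hρx, h0]; rfl)
    have hu : u ≠ 0 := by
      intro h0
      rw [h0, map_zero, zero_add] at hρx
      rcases mul_eq_zero.mp hρx with h5 | h5
      · exact hc h5
      · exact hv (hπa v h5)
    have hπu : π u ≠ 0 := fun h5 => hu (hπa u h5)
    have hπv : π v ≠ 0 := fun h5 => hv (hπa v h5)
    have heq : π u = c * π v := char2_eq_of_add_eq_zero hρx
    have hcrep : QRep π c := by
      have h5 : QRep π ((π u) * (π v)⁻¹) :=
        round_rep_mul hRπ ⟨u, rfl⟩ (inv_ne_zero hπv) (rep_inv hπv ⟨v, rfl⟩)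
      have h6 : (π u) * (π v)⁻¹ = c := by rw [heq]; field_simp
      rwa [h6] at h5
    have E1 : ((c • π)).Equivalent ((1 : F) • π) := by
      refine round_smul_smul hRπ hc one_ne_zero ?_
      rwa [inv_one, mul_one]
    -- transport the isotropic vector to `π' ⊥ c'·π'`
    obtain ⟨g⟩ := h
    have hEq : (π.prod (c • π)).Equivalent (π'.prod (c' • π')) := ⟨g⟩
    set gx := g (u, v) with hgxdef
    have hgx : (π'.prod (c' • π')) gx = 0 := by rw [hgxdef, g.map_app]; exact hρx
    have hgxne : gx ≠ 0 := by
      intro h0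
      rw [hgxdef] at h0
      exact hx ((g.toLinearEquiv.map_eq_zero_iff).mp h0)
    rw [QuadraticMap.prod_apply, QuadraticMap.smul_apply, smul_eq_mul] at hgx
    have hv' : gx.2 ≠ 0 := by
      intro h0
      rw [h0, map_zero, mul_zero, add_zero] at hgx
      exact hgxne (Prod.ext (hπ'a gx.1 hgx) h0)
    have hu' : gx.1 ≠ 0 := by
      intro h0
      rw [h0, map_zero, zero_add] at hgx
      rcases mul_eq_zero.mp hgx with h5 | h5
      · exact hc' h5
      · exact hv' (hπ'a gx.2 h5)
    have hπu' : π' gx.1 ≠ 0 := fun h5 => hu' (hπ'a gx.1 h5)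
    have hπv' : π' gx.2 ≠ 0 := fun h5 => hv' (hπ'a gx.2 h5)
    have heq' : π' gx.1 = c' * π' gx.2 := char2_eq_of_add_eq_zero hgx
    have hcrep' : QRep π' c' := by
      have h5 : QRep π' ((π' gx.1) * (π' gx.2)⁻¹) :=
        round_rep_mul hRπ' ⟨gx.1, rfl⟩ (inv_ne_zero hπv') (rep_inv hπv' ⟨gx.2, rfl⟩)
      have h6 : (π' gx.1) * (π' gx.2)⁻¹ = c' := by rw [heq']; field_simp
      rwa [h6] at h5
    have E1' : ((c' • π')).Equivalent ((1 : F) • π') := by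
      refine round_smul_smul hRπ' hc' one_ne_zero ?_
      rwa [inv_one, mul_one]
    refine ⟨1, one_ne_zero, (QuadraticMap.Equivalent.refl π).prod E1, ?_, ?_⟩
    · exact ((QuadraticMap.Equivalent.refl π).prod E1).symm.trans
        (hEq.trans ((QuadraticMap.Equivalent.refl π').prod E1'))
    · exact ((QuadraticMap.Equivalent.refl π').prod E1').symm
  · -- the main case: everything anisotropic
    have hρa : (π.prod (c • π)).Anisotropic := fun x hx => by
      by_contra hne
      exact hisoρ ⟨x, hne, hx⟩
    have hρn : NondegP (π.prod (c • π)) :=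
      nondeg_prod hNπ (nondeg_smul hNπ hc)
    obtain ⟨u, v, hu, heq⟩ :=
      common_value_of_aniso π π' c c' hc' hrank hπ'a hρa hρn h1π h1π' h
    have hπu : π u ≠ 0 := fun h5 => hu (hπa u h5)
    have hd : c * π u ≠ 0 := mul_ne_zero hc hπu
    have hπv : π' v ≠ 0 := by
      intro h5
      rw [h5, mul_zero] at heq
      exact hd heq
    set d := c * π u with hddef
    have E1 : ((d • π)).Equivalent (c • π) := by
      refine round_smul_smul hRπ hd hc ?_
      have h6 : d * c⁻¹ = π u := by rw [hddef]; field_simp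
      rw [h6]
      exact ⟨u, rfl⟩
    have E1' : ((d • π')).Equivalent (c' • π') := by
      refine round_smul_smul hRπ' (heq ▸ hd) hc' ?_
      have h6 : d * c'⁻¹ = π' v := by rw [heq]; field_simp
      rw [h6]
      exact ⟨v, rfl⟩
    refine ⟨d, hd, (QuadraticMap.Equivalent.refl π).prod E1.symm, ?_, ?_⟩
    · exact ((QuadraticMap.Equivalent.refl π).prod E1.symm).symm.trans
        (h.trans ((QuadraticMap.Equivalent.refl π').prod E1'.symm))
    · exact (QuadraticMap.Equivalent.refl π').prod E1'
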